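/- Let n ≥ 1, let φ : ℝⁿ → ℝ be twice continuously differentiable with L-Lipschitz gradient and L_H-Lipschitz Hessian. Let x, s ∈ ℝⁿ with x⁺ = x + s, g ∈ ℝⁿ, H : ℝⁿ → ℝⁿ symmetric linear, κ_g, κ_H ≥ 0, η ∈ (0,1), θ ∈ (0,1), ε_f' > 0, σ_min > 0, μ > 0, ε > 0, and set σ̄ = (2κ_g + κ_H + L + L_H)/(1 − θ/3). Let f(x), f(x⁺) ∈ ℝ satisfy |f(x) − φ(x)| + |f(x⁺) − φ(x⁺)| ≤ 2ε_f'. Suppose: (a) σ ≥ max{σ̄, σ_min}; (b) μ ≤ (1 − η)·ε / (1 + (1 − θ/3)·σ̄/σ_min); (c) the accuracy conditions ‖∇φ(x) − g‖ ≤ κ_g·max{μ/σ, ‖s‖²} and ‖(∇²φ(x) − H)s‖ ≤ κ_H·max{μ/σ, ‖s‖²} hold; (d) s satisfies the step conditions ⟨g, s⟩ + ⟨s, H s⟩ + σ‖s‖³ = 0 and ⟨s, H s⟩ + σ‖s‖³ ≥ 0, and the termination condition ‖g + H s + σ‖s‖·s‖ ≤ η·min{1, ‖s‖}·‖g‖;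 and (e) ‖∇φ(x+s)‖ > ε. Then the iteration is successful: f(x) − f(x⁺) + 2ε_f' ≥ θ·(m(x) − m(x+s)). -/

import Mathlib

open RealInnerProductSpace


theorem grad_taylor' {n : ℕ} (φ : EuclideanSpace ℝ (Fin n) → ℝ)
    (Hess : EuclideanSpace ℝ (Fin n) → EuclideanSpace ℝ (Fin n) →L[ℝ] EuclideanSpace ℝ (Fin n))
    (hHess : ∀ y, HasFDerivAt (gradient φ) (Hess y) y)
    (L_H : ℝ) (hLH0 : 0 ≤ L_H) (hLH : ∀ y z, ‖Hess y - Hess z‖ ≤ L_H * ‖y - z‖)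
    (x v : EuclideanSpace ℝ (Fin n)) :
    ‖gradient φ (x + v) - gradient φ x - Hess x v‖ ≤ L_H * ‖v‖ ^ 2 := by
  have key := Convex.norm_image_sub_le_of_norm_hasFDerivWithin_le'
    (f := gradient φ) (f' := Hess) (φ := Hess x) (s := segment ℝ x (x + v))
    (C := L_H * ‖v‖)
    (fun z _ => (hHess z).hasFDerivWithinAt)
    (fun z hz => ?_) (convex_segment _ _) (left_mem_segment ℝ x (x+v)) (right_mem_segment ℝ x (x+v))
  · have h0 : (x + v) - x = v := by abel
    rw [h0] at key
    calc ‖gradient φ (x + v) - gradient φ x - Hess x v‖ ≤ L_H * ‖v‖ * ‖v‖ := key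
      _ = L_H * ‖v‖ ^ 2 := by ring
  · obtain ⟨a, b, ha, hb, hab, rfl⟩ := hz
    have hzx : (a • x + b • (x + v)) - x = b • v := by
      have h2 : a = 1 - b := by linarith
      rw [h2]; module
    calc ‖Hess (a • x + b • (x + v)) - Hess x‖ ≤ L_H * ‖(a • x + b • (x + v)) - x‖ := hLH _ _
      _ = L_H * (b * ‖v‖) := by rw [hzx, norm_smul, Real.norm_of_nonneg hb]
      _ ≤ L_H * ‖v‖ := by
          nlinarith [mul_nonneg (mul_nonneg hLH0 (norm_nonneg v)) (by linarith : (0:ℝ) ≤ 1 - b)]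

theorem func_taylor' {n : ℕ} (φ : EuclideanSpace ℝ (Fin n) → ℝ) (hφ : ContDiff ℝ 2 φ)
    (Hess : EuclideanSpace ℝ (Fin n) → EuclideanSpace ℝ (Fin n) →L[ℝ] EuclideanSpace ℝ (Fin n))
    (hHess : ∀ y, HasFDerivAt (gradient φ) (Hess y) y)
    (L_H : ℝ)
    (hgt : ∀ x v : EuclideanSpace ℝ (Fin n),
      ‖gradient φ (x + v) - gradient φ x - Hess x v‖ ≤ L_H * ‖v‖ ^ 2)
    (x v : EuclideanSpace ℝ (Fin n)) :
    φ (x + v) ≤ φ x + ⟪gradient φ x, v⟫ + (1/2) * ⟪v, Hess x v⟫ + (L_H/3) * ‖v‖ ^ 3 := by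
  have hdiff : Differentiable ℝ φ := hφ.differentiable (by norm_num)
  have hgc : Continuous (gradient φ) := by
    rw [continuous_iff_continuousAt]
    exact fun y => (hHess y).differentiableAt.continuousAt
  have hψ : ∀ t : ℝ, HasDerivAt (fun t : ℝ => φ (x + t • v)) ⟪gradient φ (x + t • v), v⟫ t := by
    intro t
    have hline : HasDerivAt (fun t : ℝ => x + t • v) v t := by
      simpa using ((hasDerivAt_id t).smul_const v).const_add x
    have hφ' := (hdiff (x + t • v)).hasGradientAt.hasFDerivAt
    have := hφ'.comp_hasDerivAt t hline
    exact this.congr_deriv (by simp [InnerProductSpace.toDual_apply_apply])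
  have hcont : Continuous (fun t : ℝ => ⟪gradient φ (x + t • v), v⟫) := by
    exact (hgc.comp (by fun_prop)).inner continuous_const
  have hFTC : ∫ t in (0:ℝ)..1, ⟪gradient φ (x + t • v), v⟫ = φ (x + v) - φ x := by
    have := intervalIntegral.integral_eq_sub_of_hasDerivAt
      (f := fun t : ℝ => φ (x + t • v)) (f' := fun t : ℝ => ⟪gradient φ (x + t • v), v⟫)
      (fun t _ => hψ t) (hcont.intervalIntegrable 0 1)
    simpa using this
  have hpt : ∀ t ∈ Set.Icc (0:ℝ) 1, ⟪gradient φ (x + t • v), v⟫ ≤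
      ⟪gradient φ x, v⟫ + t * ⟪v, Hess x v⟫ + L_H * t ^ 2 * ‖v‖ ^ 3 := by
    intro t ht
    have h1 : ⟪gradient φ (x + t • v) - gradient φ x - Hess x (t • v), v⟫ ≤
        L_H * ‖t • v‖ ^ 2 * ‖v‖ := by
      calc ⟪gradient φ (x + t • v) - gradient φ x - Hess x (t • v), v⟫
          ≤ ‖gradient φ (x + t • v) - gradient φ x - Hess x (t • v)‖ * ‖v‖ :=
            real_inner_le_norm _ _
        _ ≤ L_H * ‖t • v‖ ^ 2 * ‖v‖ :=
            mul_le_mul_of_nonneg_right (hgt x (t • v)) (norm_nonneg v)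
    have h2 : ‖t • v‖ ^ 2 = t ^ 2 * ‖v‖ ^ 2 := by
      rw [norm_smul, Real.norm_eq_abs, mul_pow, sq_abs]
    have h3 : (Hess x) (t • v) = t • Hess x v := by
      simp [ContinuousLinearMap.map_smul]
    rw [h2, h3] at h1
    have h4 : ⟪gradient φ (x + t • v) - gradient φ x - t • Hess x v, v⟫ =
        ⟪gradient φ (x + t • v), v⟫ - ⟪gradient φ x, v⟫ - t * ⟪Hess x v, v⟫ := by
      rw [inner_sub_left, inner_sub_left, real_inner_smul_left]
    rw [h4] at h1
    have h5 : ⟪Hess x v, v⟫ = ⟪v, Hess x v⟫ := real_inner_comm _ _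
    rw [h5] at h1
    have h6 : L_H * (t ^ 2 * ‖v‖ ^ 2) * ‖v‖ = L_H * t ^ 2 * ‖v‖ ^ 3 := by ring
    rw [h6] at h1
    linarith
  set A := ⟪gradient φ x, v⟫
  set B := ⟪v, Hess x v⟫
  have hpoly : ∫ t in (0:ℝ)..1, (A + t * B + L_H * t ^ 2 * ‖v‖ ^ 3) =
      A + (1/2) * B + (L_H/3) * ‖v‖ ^ 3 := by
    have hF : ∀ t ∈ Set.uIcc (0:ℝ) 1, HasDerivAt
        (fun t : ℝ => A * t + B * t ^ 2 / 2 + L_H * ‖v‖ ^ 3 * t ^ 3 / 3)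
        (A + t * B + L_H * t ^ 2 * ‖v‖ ^ 3) t := by
      intro t _
      have h := (((hasDerivAt_id t).const_mul A).add
        (((hasDerivAt_pow 2 t).const_mul B).div_const 2)).add
        (((hasDerivAt_pow 3 t).const_mul (L_H * ‖v‖ ^ 3)).div_const 3)
      exact h.congr_deriv (by push_cast; ring)
    have := intervalIntegral.integral_eq_sub_of_hasDerivAt hF
      ((by fun_prop : Continuous fun t : ℝ => A + t * B + L_H * t ^ 2 * ‖v‖ ^ 3).intervalIntegrable 0 1)
    rw [this]; ring
  have hmono := intervalIntegral.integral_mono_on (μ := MeasureTheory.volume)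
    (by norm_num : (0:ℝ) ≤ 1)
    (hcont.intervalIntegrable 0 1)
    ((by fun_prop : Continuous fun t : ℝ => A + t * B + L_H * t ^ 2 * ‖v‖ ^ 3).intervalIntegrable 0 1)
    hpt
  rw [hFTC, hpoly] at hmono
  linarith

set_option maxHeartbeats 4000000 in
/-- True iteration with large `σ` must be successful (Corollary 1): under the
accuracy conditions, the step conditions, the termination condition,
`σ ≥ max{σ̄, σ_min}`, the accuracy relation on `μ`, and `‖∇φ(x+s)‖ > ε`, the
acceptance test `f(x) − f(x⁺) + 2ε_f' ≥ θ·(m(x) − m(x+s))` holds. -/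
theorem sarc_true_large_sigma_successful (n : ℕ) (hn : 1 ≤ n)
    (φ : EuclideanSpace ℝ (Fin n) → ℝ) (hφ : ContDiff ℝ 2 φ)
    (Hess : EuclideanSpace ℝ (Fin n) →
      EuclideanSpace ℝ (Fin n) →L[ℝ] EuclideanSpace ℝ (Fin n))
    (hHess : ∀ y, HasFDerivAt (gradient φ) (Hess y) y)
    (L L_H : ℝ)
    (hL : ∀ y z, ‖gradient φ y - gradient φ z‖ ≤ L * ‖y - z‖)
    (hLH : ∀ y z, ‖Hess y - Hess z‖ ≤ L_H * ‖y - z‖)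
    (x s g : EuclideanSpace ℝ (Fin n))
    (H : EuclideanSpace ℝ (Fin n) →L[ℝ] EuclideanSpace ℝ (Fin n))
    (hHsym : ∀ u v : EuclideanSpace ℝ (Fin n), ⟪H u, v⟫ = ⟪u, H v⟫)
    (κg κH η θ εf' σmin σ μ ε σbar fx fxp : ℝ)
    (hκg : 0 ≤ κg) (hκH : 0 ≤ κH)
    (hη : η ∈ Set.Ioo (0 : ℝ) 1) (hθ : θ ∈ Set.Ioo (0 : ℝ) 1)
    (hεf' : 0 < εf') (hσmin : 0 < σmin) (hμ : 0 < μ) (hε : 0 < ε)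
    (hσbar : σbar = (2 * κg + κH + L + L_H) / (1 - θ / 3))
    (herr : |fx - φ x| + |fxp - φ (x + s)| ≤ 2 * εf')
    (hσbig : σ ≥ max σbar σmin)
    (hμle : μ ≤ (1 - η) * ε / (1 + (1 - θ / 3) * σbar / σmin))
    (hacc_g : ‖gradient φ x - g‖ ≤ κg * max (μ / σ) (‖s‖ ^ 2))
    (hacc_H : ‖(Hess x - H) s‖ ≤ κH * max (μ / σ) (‖s‖ ^ 2))
    (hstep1 : ⟪g, s⟫ + ⟪s, H s⟫ + σ * ‖s‖ ^ 3 = 0)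
    (hstep2 : ⟪s, H s⟫ + σ * ‖s‖ ^ 3 ≥ 0)
    (hterm : ‖g + H s + (σ * ‖s‖) • s‖ ≤ η * min 1 ‖s‖ * ‖g‖)
    (hgrad : ‖gradient φ (x + s)‖ > ε) :
    fx - fxp + 2 * εf' ≥
      θ * (-(⟪g, s⟫ + (1 / 2) * ⟪s, H s⟫ + (σ / 3) * ‖s‖ ^ 3)) := by
  obtain ⟨hη0, hη1⟩ := hη
  obtain ⟨hθ0, hθ1⟩ := hθ
  have hden : (0:ℝ) < 1 - θ/3 := by linarith
  -- nonnegativity of Lipschitz constants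
  have hL0 : 0 ≤ L := by
    set y := EuclideanSpace.single (⟨0, hn⟩ : Fin n) (1:ℝ)
    have h := hL y 0
    have h1 : ‖y - (0 : EuclideanSpace ℝ (Fin n))‖ = 1 := by
      rw [sub_zero]; simp [y, EuclideanSpace.norm_single]
    rw [h1, mul_one] at h
    exact le_trans (norm_nonneg _) h
  have hLH0 : 0 ≤ L_H := by
    set y := EuclideanSpace.single (⟨0, hn⟩ : Fin n) (1:ℝ)
    have h := hLH y 0
    have h1 : ‖y - (0 : EuclideanSpace ℝ (Fin n))‖ = 1 := by
      rw [sub_zero]; simp [y, EuclideanSpace.norm_single]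
    rw [h1, mul_one] at h
    exact le_trans (norm_nonneg _) h
  have hσbar0 : 0 ≤ σbar := by
    rw [hσbar]
    apply div_nonneg (by linarith) hden.le
  have hσσbar : σbar ≤ σ := le_trans (le_max_left _ _) hσbig
  have hσσmin : σmin ≤ σ := le_trans (le_max_right _ _) hσbig
  have hσpos : 0 < σ := lt_of_lt_of_le hσmin hσσmin
  have hsbar_eq : σbar * (1 - θ/3) = 2*κg + κH + L + L_H := by
    rw [hσbar]
    exact div_mul_cancel₀ _ hden.ne'
  have hN0 : (0:ℝ) ≤ ‖s‖ := norm_nonneg s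
  have hN30 : (0:ℝ) ≤ ‖s‖ ^ 3 := by positivity
  have hgt := grad_taylor' φ Hess hHess L_H hLH0 hLH
  have hΔ : -(⟪g, s⟫ + (1/2) * ⟪s, H s⟫ + (σ/3) * ‖s‖ ^ 3) ≥ σ/6 * ‖s‖ ^ 3 := by
    linarith
  by_cases hcase : μ / σ ≤ ‖s‖ ^ 2
  · -- large step case
    rw [max_eq_right hcase] at hacc_g hacc_H
    have htay := func_taylor' φ hφ Hess hHess L_H hgt x s
    have hfd : fx - fxp ≥ (φ x - φ (x + s)) - 2 * εf' := by
      have a1 := neg_abs_le (fx - φ x)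
      have a2 := le_abs_self (fxp - φ (x + s))
      linarith
    have e1 : ⟪gradient φ x, s⟫ ≤ ⟪g, s⟫ + κg * ‖s‖ ^ 3 := by
      have h1 : ⟪gradient φ x - g, s⟫ ≤ ‖gradient φ x - g‖ * ‖s‖ := real_inner_le_norm _ _
      have h2 : ‖gradient φ x - g‖ * ‖s‖ ≤ (κg * ‖s‖ ^ 2) * ‖s‖ :=
        mul_le_mul_of_nonneg_right hacc_g hN0
      have h3 : ⟪gradient φ x - g, s⟫ = ⟪gradient φ x, s⟫ - ⟪g, s⟫ := inner_sub_left _ _ _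
      nlinarith
    have e2 : ⟪s, Hess x s⟫ ≤ ⟪s, H s⟫ + κH * ‖s‖ ^ 3 := by
      have h1 : ⟪(Hess x - H) s, s⟫ ≤ ‖(Hess x - H) s‖ * ‖s‖ := real_inner_le_norm _ _
      have h2 : ‖(Hess x - H) s‖ * ‖s‖ ≤ (κH * ‖s‖ ^ 2) * ‖s‖ :=
        mul_le_mul_of_nonneg_right hacc_H hN0
      have h3 : ⟪(Hess x - H) s, s⟫ = ⟪Hess x s, s⟫ - ⟪H s, s⟫ := by
        rw [ContinuousLinearMap.sub_apply, inner_sub_left]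
      have h4 : ⟪Hess x s, s⟫ = ⟪s, Hess x s⟫ := real_inner_comm s (Hess x s)
      have h5 : ⟪H s, s⟫ = ⟪s, H s⟫ := hHsym s s
      nlinarith
    -- θ·Δ ≤ Δ - (1-θ)·σ/6·N³
    have hθΔ : θ * (-(⟪g, s⟫ + (1/2) * ⟪s, H s⟫ + (σ/3) * ‖s‖ ^ 3)) ≤
        (-(⟪g, s⟫ + (1/2) * ⟪s, H s⟫ + (σ/3) * ‖s‖ ^ 3)) - (1-θ) * (σ/6 * ‖s‖ ^ 3) := by
      have h7 := mul_le_mul_of_nonneg_left hΔ (by linarith : (0:ℝ) ≤ 1 - θ)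
      nlinarith
    have key1 : (2*κg + κH + L + L_H) * ‖s‖ ^ 3 ≤ (σ * (1 - θ/3)) * ‖s‖ ^ 3 := by
      have : σbar * (1 - θ/3) ≤ σ * (1 - θ/3) := mul_le_mul_of_nonneg_right hσσbar hden.le
      rw [hsbar_eq] at this
      exact mul_le_mul_of_nonneg_right this hN30
    linarith [hfd, htay, e1, e2, hθΔ, key1, mul_nonneg hL0 hN30, mul_nonneg hLH0 hN30]
  · -- small step case: contradiction with ‖∇φ(x+s)‖ > ε
    exfalso
    push_neg at hcase
    have hN2 : ‖s‖ ^ 2 ≤ μ / σ := hcase.le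
    rw [max_eq_left hN2] at hacc_g hacc_H
    set G := ‖gradient φ (x + s)‖ with hGdef
    have hG0 : 0 ≤ G := norm_nonneg _
    have hm10 : (0:ℝ) ≤ min 1 ‖s‖ := le_min (by norm_num) hN0
    have hm1a : min 1 ‖s‖ ≤ 1 := min_le_left _ _
    have hm1b : min 1 ‖s‖ ≤ ‖s‖ := min_le_right _ _
    have hdecomp : gradient φ (x + s) = (g + H s + (σ * ‖s‖) • s) +
        ((gradient φ x - g) + ((Hess x - H) s +
          ((gradient φ (x + s) - gradient φ x - Hess x s) - (σ * ‖s‖) • s))) := by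
      simp only [ContinuousLinearMap.sub_apply]
      abel
    have hGb : G ≤ ‖g + H s + (σ * ‖s‖) • s‖ + ‖gradient φ x - g‖ + ‖(Hess x - H) s‖ +
        ‖gradient φ (x + s) - gradient φ x - Hess x s‖ + ‖(σ * ‖s‖) • s‖ := by
      rw [hGdef]
      nth_rewrite 1 [hdecomp]
      refine le_trans (norm_add_le _ _) ?_
      have i1 := norm_add_le (gradient φ x - g) ((Hess x - H) s +
        ((gradient φ (x + s) - gradient φ x - Hess x s) - (σ * ‖s‖) • s))
      have i2 := norm_add_le ((Hess x - H) s)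
        ((gradient φ (x + s) - gradient φ x - Hess x s) - (σ * ‖s‖) • s)
      have i3 := norm_sub_le (gradient φ (x + s) - gradient φ x - Hess x s) ((σ * ‖s‖) • s)
      linarith
    have hsmul : ‖(σ * ‖s‖) • s‖ = σ * ‖s‖ ^ 2 := by
      rw [norm_smul, Real.norm_of_nonneg (by positivity : (0:ℝ) ≤ σ * ‖s‖)]
      ring
    have hg_norm : ‖g‖ ≤ G + L * ‖s‖ + κg * (μ / σ) := by
      have hgeq : g = gradient φ (x + s) - (gradient φ (x + s) - gradient φ x) -
          (gradient φ x - g) := by abel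
      have hLs : ‖gradient φ (x + s) - gradient φ x‖ ≤ L * ‖s‖ := by
        have := hL (x + s) x
        simpa using this
      calc ‖g‖ = ‖gradient φ (x + s) - (gradient φ (x + s) - gradient φ x) -
          (gradient φ x - g)‖ := by rw [← hgeq]
        _ ≤ ‖gradient φ (x + s) - (gradient φ (x + s) - gradient φ x)‖ +
            ‖gradient φ x - g‖ := norm_sub_le _ _
        _ ≤ (‖gradient φ (x + s)‖ + ‖gradient φ (x + s) - gradient φ x‖) +
            ‖gradient φ x - g‖ := by gcongr; exact norm_sub_le _ _
        _ ≤ G + L * ‖s‖ + κg * (μ / σ) := by rw [hGdef]; gcongr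
    have hμσ0 : 0 ≤ μ / σ := le_of_lt (div_pos hμ hσpos)
    -- bound the termination term
    have hT1 : η * min 1 ‖s‖ * ‖g‖ ≤ η * G + L * (μ / σ) + κg * (μ / σ) := by
      have b0 : η * min 1 ‖s‖ * ‖g‖ ≤ η * min 1 ‖s‖ * (G + L * ‖s‖ + κg * (μ / σ)) :=
        mul_le_mul_of_nonneg_left hg_norm (mul_nonneg hη0.le hm10)
      have b1 : η * min 1 ‖s‖ * G ≤ η * G := by
        have := mul_nonneg (mul_nonneg hη0.le hG0) (by linarith : (0:ℝ) ≤ 1 - min 1 ‖s‖)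
        nlinarith [this]
      have b2 : η * min 1 ‖s‖ * (L * ‖s‖) ≤ L * (μ / σ) := by
        have c1 : min 1 ‖s‖ * ‖s‖ ≤ ‖s‖ ^ 2 := by nlinarith [hm1b, hN0]
        have c2 : L * (min 1 ‖s‖ * ‖s‖) ≤ L * (‖s‖ ^ 2) := mul_le_mul_of_nonneg_left c1 hL0
        have c3 : L * ‖s‖ ^ 2 ≤ L * (μ / σ) := mul_le_mul_of_nonneg_left hN2 hL0
        nlinarith [c2, c3,
          mul_nonneg (by linarith : (0:ℝ) ≤ 1 - η)
            (mul_nonneg (mul_nonneg hL0 hm10) hN0)]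
      have b3 : η * min 1 ‖s‖ * (κg * (μ / σ)) ≤ κg * (μ / σ) := by
        have d1 : η * min 1 ‖s‖ ≤ 1 := by nlinarith
        nlinarith [mul_nonneg hκg hμσ0,
          mul_nonneg (by linarith : (0:ℝ) ≤ 1 - η * min 1 ‖s‖) (mul_nonneg hκg hμσ0)]
      nlinarith [b0, b1, b2, b3]

    have hLHs : L_H * ‖s‖ ^ 2 ≤ L_H * (μ / σ) := mul_le_mul_of_nonneg_left hN2 hLH0
    have hσs : σ * ‖s‖ ^ 2 ≤ μ := by
      have := (le_div_iff₀ hσpos).mp hN2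
      linarith
    have t4 := hgt x s
    rw [hsmul] at hGb
    have hsum : (1 - η) * G ≤ (2*κg + κH + L + L_H) * (μ / σ) + μ := by
      linarith [hGb, hterm, hT1, hacc_g, hacc_H, t4, hLHs, hσs]
    rw [← hsbar_eq] at hsum
    have hdivle : μ / σ ≤ μ / σmin := div_le_div_of_nonneg_left hμ.le hσmin hσσmin
    have hstep : σbar * (1 - θ/3) * (μ / σ) ≤ σbar * (1 - θ/3) * (μ / σmin) :=
      mul_le_mul_of_nonneg_left hdivle (mul_nonneg hσbar0 hden.le)
    have hring : σbar * (1 - θ/3) * (μ / σmin) + μ = μ * (1 + (1 - θ/3) * σbar / σmin) := by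
      field_simp
      ring
    have hD : (0:ℝ) < 1 + (1 - θ/3) * σbar / σmin := by
      have : (0:ℝ) ≤ (1 - θ/3) * σbar / σmin := by positivity
      linarith
    have hμD : μ * (1 + (1 - θ/3) * σbar / σmin) ≤ (1 - η) * ε := by
      rw [le_div_iff₀ hD] at hμle
      linarith
    have hGε : (1 - η) * G ≤ (1 - η) * ε := by
      calc (1 - η) * G ≤ σbar * (1 - θ/3) * (μ / σ) + μ := hsum
        _ ≤ σbar * (1 - θ/3) * (μ / σmin) + μ := by linarith
        _ = μ * (1 + (1 - θ/3) * σbar / σmin) := hring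
        _ ≤ (1 - η) * ε := hμD
    have hGle : G ≤ ε := (mul_le_mul_iff_right₀ (by linarith : (0:ℝ) < 1 - η)).mp hGε
    linarith
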